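/- Let n ≥ 0 be an integer, let r ≥ 0, and let λ be a nonzero real number. Then lim_{t↓0} e^{−λ²/(4t)} · (∂ⁿ/∂rⁿ)[Q₂(t, cos(√t·r)·cosh λ)] = (λ/sinh λ) · (∂ⁿ/∂rⁿ) e^{−r²·λ·coth(λ)/4}. (Note that for t sufficiently small, cos(√t·r)·cosh λ > 1, so the expression is defined.) -/

import Mathlib

open Real Filter Set Topology

noncomputable section

/-- Inverse hyperbolic cosine on `[1, ∞)`. -/
def arccosh (x : ℝ) : ℝ := Real.log (x + Real.sqrt (x ^ 2 - 1))

/-- `Q₂(t,x) = (arccosh x/√(x²−1))·exp((arccosh x)²/(4t))`, for `x > 1`. -/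
def Q2 (t x : ℝ) : ℝ :=
  (arccosh x / Real.sqrt (x ^ 2 - 1)) * Real.exp ((arccosh x) ^ 2 / (4 * t))

lemma analyticAt_re_comp_ofReal {F : ℂ → ℂ} {x : ℝ} (hF : AnalyticAt ℂ F (x : ℂ)) :
    AnalyticAt ℝ (fun t : ℝ => (F (t : ℂ)).re) x := by
  have h1 : AnalyticAt ℝ F (x : ℂ) := hF.restrictScalars
  have h2 : AnalyticAt ℝ (fun t : ℝ => (t : ℂ)) x := Complex.ofRealCLM.analyticAt x
  exact (Complex.reCLM.analyticAt _).comp (h1.comp h2)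

lemma analyticAt_rcos (x : ℝ) : AnalyticAt ℝ Real.cos x := by
  have hC : AnalyticAt ℂ Complex.cos (x : ℂ) := by
    rw [Complex.analyticAt_iff_eventually_differentiableAt]
    exact Filter.Eventually.of_forall fun z => Complex.differentiable_cos z
  exact (analyticAt_re_comp_ofReal hC).congr
    (Filter.Eventually.of_forall fun t => Complex.cos_ofReal_re t)

lemma analyticAt_rlog {x : ℝ} (hx : 0 < x) : AnalyticAt ℝ Real.log x := by
  have hC : AnalyticAt ℂ Complex.log (x : ℂ) :=
    analyticAt_clog (by simp [Complex.mem_slitPlane_iff, hx])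
  refine (analyticAt_re_comp_ofReal hC).congr (Filter.Eventually.of_forall fun t => ?_)
  simp [Complex.log_re, Complex.norm_real, Real.norm_eq_abs, Real.log_abs]

lemma analyticAt_rsqrt {x : ℝ} (hx : 0 < x) : AnalyticAt ℝ Real.sqrt x := by
  have hC : AnalyticAt ℂ (fun z : ℂ => z ^ (1/2 : ℂ)) (x : ℂ) :=
    analyticAt_id.cpow analyticAt_const (by simp [Complex.mem_slitPlane_iff, hx])
  refine (analyticAt_re_comp_ofReal hC).congr ?_
  filter_upwards [eventually_gt_nhds hx] with t ht
  rw [show (1/2 : ℂ) = ((1/2 : ℝ) : ℂ) by norm_num, ← Complex.ofReal_cpow ht.le,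
    Complex.ofReal_re]
  exact (Real.sqrt_eq_rpow t).symm

lemma analyticAt_sqrt_comp {f : ℝ → ℝ} {x : ℝ} (hf : AnalyticAt ℝ f x) (hx : 0 < f x) :
    AnalyticAt ℝ (fun y => Real.sqrt (f y)) x :=
  (analyticAt_rsqrt hx).comp hf

lemma analyticAt_log_comp {f : ℝ → ℝ} {x : ℝ} (hf : AnalyticAt ℝ f x) (hx : 0 < f x) :
    AnalyticAt ℝ (fun y => Real.log (f y)) x :=
  (analyticAt_rlog hx).comp hf

lemma analyticAt_arccosh {x : ℝ} (hx : 1 < x) : AnalyticAt ℝ arccosh x := by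
  have h1 : AnalyticAt ℝ (fun y : ℝ => y ^ 2 - 1) x := (analyticAt_id.pow 2).sub analyticAt_const
  have h2 : AnalyticAt ℝ (fun y : ℝ => Real.sqrt (y ^ 2 - 1)) x :=
    analyticAt_sqrt_comp h1 (by nlinarith)
  have h3 : AnalyticAt ℝ (fun y : ℝ => y + Real.sqrt (y ^ 2 - 1)) x := analyticAt_id.add h2
  have h4 : (0:ℝ) < x + Real.sqrt (x ^ 2 - 1) := by
    have := Real.sqrt_nonneg (x ^ 2 - 1); linarith
  exact analyticAt_log_comp h3 h4

lemma sqrt_cosh_sq_sub_one {lam : ℝ} (hlam : 0 < lam) :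
    Real.sqrt (Real.cosh lam ^ 2 - 1) = Real.sinh lam := by
  rw [Real.cosh_sq]
  simpa using Real.sqrt_sq (Real.sinh_pos_iff.mpr hlam).le

lemma arccosh_cosh {lam : ℝ} (hlam : 0 < lam) : arccosh (Real.cosh lam) = lam := by
  rw [arccosh, sqrt_cosh_sq_sub_one hlam, Real.cosh_add_sinh, Real.log_exp]

lemma cosh_arccosh {w : ℝ} (hw : 1 < w) : Real.cosh (arccosh w) = w := by
  have h1 : (0:ℝ) ≤ w ^ 2 - 1 := by nlinarith
  have h2 : (0:ℝ) < w + Real.sqrt (w ^ 2 - 1) := by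
    have := Real.sqrt_nonneg (w ^ 2 - 1); linarith
  rw [arccosh, Real.cosh_eq, Real.exp_log h2, ← Real.log_inv, Real.exp_log (by positivity)]
  have h3 : Real.sqrt (w ^ 2 - 1) ^ 2 = w ^ 2 - 1 := Real.sq_sqrt h1
  field_simp
  nlinarith [h3]

lemma arccosh_lt {w lam : ℝ} (hlam : 0 < lam) (h1 : 1 < w) (h2 : w < Real.cosh lam) :
    arccosh w < lam := by
  have h3 : Real.sqrt (w ^ 2 - 1) < Real.sqrt (Real.cosh lam ^ 2 - 1) :=
    Real.sqrt_lt_sqrt (by nlinarith) (by nlinarith)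
  rw [sqrt_cosh_sq_sub_one hlam] at h3
  have h4 : (0:ℝ) < w + Real.sqrt (w ^ 2 - 1) := by
    have := Real.sqrt_nonneg (w ^ 2 - 1); linarith
  calc arccosh w = Real.log (w + Real.sqrt (w ^ 2 - 1)) := rfl
    _ < Real.log (Real.cosh lam + Real.sinh lam) := Real.log_lt_log h4 (by linarith)
    _ = lam := by rw [Real.cosh_add_sinh, Real.log_exp]

lemma arccosh_pos {w : ℝ} (hw : 1 < w) : 0 < arccosh w := by
  rw [arccosh]
  apply Real.log_pos
  have := Real.sqrt_nonneg (w ^ 2 - 1); linarith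

lemma analyticAt_arccosh_comp {f : ℝ → ℝ} {x : ℝ} (hf : AnalyticAt ℝ f x) (hx : 1 < f x) :
    AnalyticAt ℝ (fun y => arccosh (f y)) x := (analyticAt_arccosh hx).comp hf

def hfun (lam u : ℝ) : ℝ := arccosh (Real.cos u * Real.cosh lam)
def gfun (lam u : ℝ) : ℝ :=
  hfun lam u / Real.sqrt ((Real.cos u * Real.cosh lam) ^ 2 - 1)
def Afun (lam u : ℝ) : ℝ := hfun lam u ^ 2
def Bfun (lam : ℝ) : ℝ → ℝ := dslope (dslope (Afun lam) 0) 0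

lemma cos_lt_one' {u : ℝ} (hu : u ≠ 0) (hu2 : |u| < π) : Real.cos u < 1 := by
  rw [← Real.cos_abs]
  have h0 : (0:ℝ) < |u| := abs_pos.mpr hu
  calc Real.cos |u| < Real.cos 0 :=
        Real.strictAntiOn_cos ⟨le_refl 0, Real.pi_pos.le⟩ ⟨abs_nonneg u, hu2.le⟩ h0
    _ = 1 := Real.cos_zero

lemma exists_eps {lam : ℝ} (hlam : lam ≠ 0) :
    ∃ ε : ℝ, 0 < ε ∧ ε ≤ π ∧ ∀ u : ℝ, |u| < ε → 1 < Real.cos u * Real.cosh lam := by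
  have hcosh : 1 < Real.cosh lam := Real.one_lt_cosh.mpr hlam
  have hc : ContinuousAt (fun u : ℝ => Real.cos u * Real.cosh lam) 0 :=
    (Real.continuous_cos.mul continuous_const).continuousAt
  have hval : (1:ℝ) < Real.cos 0 * Real.cosh lam := by simpa using hcosh
  have hev : ∀ᶠ u in 𝓝 (0:ℝ), 1 < Real.cos u * Real.cosh lam :=
    hc.tendsto.eventually (eventually_gt_nhds hval)
  obtain ⟨ε, hε, h⟩ := Metric.eventually_nhds_iff.mp hev
  refine ⟨min ε π, lt_min hε Real.pi_pos, min_le_right _ _, fun u hu => ?_⟩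
  exact h (by rw [Real.dist_eq, sub_zero]; exact hu.trans_le (min_le_left _ _))

lemma analyticAt_hfun {lam u : ℝ} (hu : 1 < Real.cos u * Real.cosh lam) :
    AnalyticAt ℝ (hfun lam) u := by
  have hw : AnalyticAt ℝ (fun v => Real.cos v * Real.cosh lam) u :=
    (analyticAt_rcos u).mul analyticAt_const
  exact analyticAt_arccosh_comp hw hu

lemma analyticAt_Afun {lam u : ℝ} (hu : 1 < Real.cos u * Real.cosh lam) :
    AnalyticAt ℝ (Afun lam) u := (analyticAt_hfun hu).pow 2

lemma analyticAt_gfun {lam u : ℝ} (hu : 1 < Real.cos u * Real.cosh lam) :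
    AnalyticAt ℝ (gfun lam) u := by
  have hw : AnalyticAt ℝ (fun v => Real.cos v * Real.cosh lam) u :=
    (analyticAt_rcos u).mul analyticAt_const
  have hden : AnalyticAt ℝ (fun v => Real.sqrt ((Real.cos v * Real.cosh lam) ^ 2 - 1)) u :=
    analyticAt_sqrt_comp ((hw.pow 2).sub analyticAt_const) (by nlinarith)
  exact (analyticAt_hfun hu).div hden
    (ne_of_gt (Real.sqrt_pos.mpr (by nlinarith)))

lemma hfun_zero {lam : ℝ} (hlam : 0 < lam) : hfun lam 0 = lam := by
  simp [hfun, arccosh_cosh hlam]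

lemma Afun_zero {lam : ℝ} (hlam : 0 < lam) : Afun lam 0 = lam ^ 2 := by
  simp [Afun, hfun_zero hlam]

lemma gfun_zero {lam : ℝ} (hlam : 0 < lam) : gfun lam 0 = lam / Real.sinh lam := by
  simp [gfun, hfun, arccosh_cosh hlam, sqrt_cosh_sq_sub_one hlam]

lemma one_lt_w0 {lam : ℝ} (hlam : 0 < lam) : 1 < Real.cos 0 * Real.cosh lam := by
  simpa using Real.one_lt_cosh.mpr hlam.ne'

lemma deriv_Afun_zero {lam : ℝ} (hlam : 0 < lam) : deriv (Afun lam) 0 = 0 := by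
  have hd : DifferentiableAt ℝ (Afun lam) 0 := (analyticAt_Afun (one_lt_w0 hlam)).differentiableAt
  have h1 : Tendsto (slope (Afun lam) 0) (𝓝[≠](0:ℝ)) (𝓝 (deriv (Afun lam) 0)) :=
    hasDerivAt_iff_tendsto_slope.mp hd.hasDerivAt
  have hneg : Tendsto (fun u : ℝ => -u) (𝓝[≠](0:ℝ)) (𝓝[≠](0:ℝ)) := by
    apply tendsto_nhdsWithin_of_tendsto_nhds_of_eventually_within
    · simpa using (continuous_neg.tendsto (0:ℝ)).mono_left nhdsWithin_le_nhds
    · filter_upwards [eventually_mem_nhdsWithin] with u hu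
      simp only [mem_compl_singleton_iff] at hu ⊢
      simpa using hu
  have h2 : Tendsto (fun u : ℝ => slope (Afun lam) 0 (-u)) (𝓝[≠](0:ℝ))
      (𝓝 (deriv (Afun lam) 0)) := h1.comp hneg
  have heq : ∀ u : ℝ, slope (Afun lam) 0 (-u) = -slope (Afun lam) 0 u := by
    intro u
    simp only [slope_def_field, Afun, hfun, Real.cos_neg]
    ring
  have h3 : Tendsto (fun u : ℝ => -slope (Afun lam) 0 u) (𝓝[≠](0:ℝ))
      (𝓝 (deriv (Afun lam) 0)) := by
    refine h2.congr fun u => heq u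
  have h4 := h1.neg
  have := tendsto_nhds_unique h3 h4
  linarith

lemma Bfun_eq {lam v : ℝ} (hlam : 0 < lam) (hv : v ≠ 0) :
    Bfun lam v = (Afun lam v - lam ^ 2) / v ^ 2 := by
  rw [Bfun, dslope_of_ne _ hv, slope_def_field, dslope_of_ne _ hv, slope_def_field,
    dslope_same, deriv_Afun_zero hlam, Afun_zero hlam]
  rw [sub_zero, sub_zero, div_div, ← pow_two]

lemma sq_mul_Bfun {lam : ℝ} (v : ℝ) (hlam : 0 < lam) :
    v ^ 2 * Bfun lam v = Afun lam v - lam ^ 2 := by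
  rcases eq_or_ne v 0 with rfl | hv
  · simp [Afun_zero hlam]
  · rw [Bfun_eq hlam hv]; field_simp

lemma analyticAt_Bfun_zero {lam : ℝ} (hlam : 0 < lam) : AnalyticAt ℝ (Bfun lam) 0 := by
  obtain ⟨p, hp⟩ := analyticAt_Afun (one_lt_w0 hlam)
  exact (hp.has_fpower_series_dslope_fslope.has_fpower_series_dslope_fslope).analyticAt

lemma analyticAt_Bfun {lam u : ℝ} (hlam : 0 < lam) (hu : 1 < Real.cos u * Real.cosh lam) :
    AnalyticAt ℝ (Bfun lam) u := by
  rcases eq_or_ne u 0 with rfl | hu0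
  · exact analyticAt_Bfun_zero hlam
  · have h1 : AnalyticAt ℝ (fun v => (Afun lam v - lam ^ 2) / v ^ 2) u :=
      ((analyticAt_Afun hu).sub analyticAt_const).div (analyticAt_id.pow 2) (pow_ne_zero 2 hu0)
    refine h1.congr ?_
    filter_upwards [eventually_ne_nhds hu0] with v hv
    exact (Bfun_eq hlam hv).symm

lemma tendsto_cos_sub_one_div_sq :
    Tendsto (fun v : ℝ => (Real.cos v - 1) / v ^ 2) (𝓝[≠](0:ℝ)) (𝓝 (-(1/2))) := by
  have hs : Tendsto (fun x : ℝ => Real.sin x / x) (𝓝[≠](0:ℝ)) (𝓝 1) := by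
    have h := hasDerivAt_iff_tendsto_slope.mp (Real.hasDerivAt_sin 0)
    rw [Real.cos_zero] at h
    refine h.congr fun x => ?_
    simp [slope_def_field]
  have hhalf : Tendsto (fun v : ℝ => v / 2) (𝓝[≠](0:ℝ)) (𝓝[≠](0:ℝ)) := by
    apply tendsto_nhdsWithin_of_tendsto_nhds_of_eventually_within
    · simpa using ((continuous_id.div_const (2:ℝ)).tendsto (0:ℝ)).mono_left nhdsWithin_le_nhds
    · filter_upwards [eventually_mem_nhdsWithin] with u hu
      simp only [mem_compl_singleton_iff] at hu ⊢
      exact div_ne_zero hu two_ne_zero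
  have h1 : Tendsto (fun v : ℝ => Real.sin (v/2) / (v/2)) (𝓝[≠](0:ℝ)) (𝓝 1) := hs.comp hhalf
  have h2 : Tendsto (fun v : ℝ => -(1/2) * (Real.sin (v/2) / (v/2)) ^ 2) (𝓝[≠](0:ℝ))
      (𝓝 (-(1/2) * 1 ^ 2)) := tendsto_const_nhds.mul (h1.pow 2)
  have heq : ∀ᶠ v in 𝓝[≠](0:ℝ),
      -(1/2) * (Real.sin (v/2) / (v/2)) ^ 2 = (Real.cos v - 1) / v ^ 2 := by
    filter_upwards [eventually_mem_nhdsWithin] with v hv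
    simp only [mem_compl_singleton_iff] at hv
    have hc : Real.cos v = 1 - 2 * Real.sin (v/2) ^ 2 := by
      have hct := Real.cos_two_mul (v/2)
      rw [show 2*(v/2) = v by ring] at hct
      nlinarith [Real.sin_sq_add_cos_sq (v/2)]
    rw [hc]
    field_simp
    ring
  have := h2.congr' heq
  simpa using this

lemma Bfun_zero {lam : ℝ} (hlam : 0 < lam) :
    Bfun lam 0 = -(lam * (Real.cosh lam / Real.sinh lam)) := by
  obtain ⟨ε, hε, hεπ, hball⟩ := exists_eps hlam.ne'
  have hsinh : 0 < Real.sinh lam := Real.sinh_pos_iff.mpr hlam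
  have hcoshpos := Real.cosh_pos lam
  have hevε : ∀ᶠ v in 𝓝[≠](0:ℝ), |v| < ε :=
    eventually_nhdsWithin_of_eventually_nhds (by simpa using eventually_abs_sub_lt (0:ℝ) hε)
  have hevne : ∀ᶠ v in 𝓝[≠](0:ℝ), v ≠ 0 := by
    filter_upwards [eventually_mem_nhdsWithin] with v hv
    simpa only [mem_compl_singleton_iff] using hv
  have hmt : Tendsto (hfun lam) (𝓝[≠](0:ℝ)) (𝓝[≠]lam) := by
    rw [tendsto_nhdsWithin_iff]
    constructor
    · have hc : ContinuousAt (hfun lam) 0 := (analyticAt_hfun (one_lt_w0 hlam)).continuousAt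
      have h5 : Tendsto (hfun lam) (𝓝[≠](0:ℝ)) (𝓝 (hfun lam 0)) :=
        hc.tendsto.mono_left nhdsWithin_le_nhds
      rwa [hfun_zero hlam] at h5
    · filter_upwards [hevε, hevne] with v h1 h2
      have hw : 1 < Real.cos v * Real.cosh lam := hball v h1
      have hcos : Real.cos v < 1 := cos_lt_one' h2 (h1.trans_le hεπ)
      have hwlt : Real.cos v * Real.cosh lam < Real.cosh lam := by nlinarith
      exact mem_compl_singleton_iff.mpr (ne_of_lt (arccosh_lt hlam hw hwlt))
  have hmt' : Tendsto (hfun lam) (𝓝[≠](0:ℝ)) (𝓝 lam) := hmt.mono_right nhdsWithin_le_nhds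
  have hslope : Tendsto (slope Real.cosh lam) (𝓝[≠]lam) (𝓝 (Real.sinh lam)) :=
    hasDerivAt_iff_tendsto_slope.mp (Real.hasDerivAt_cosh lam)
  have h1 : Tendsto (fun v => (slope Real.cosh lam (hfun lam v))⁻¹) (𝓝[≠](0:ℝ))
      (𝓝 (Real.sinh lam)⁻¹) := (hslope.comp hmt).inv₀ (ne_of_gt hsinh)
  have h3 : Tendsto (fun v => hfun lam v + lam) (𝓝[≠](0:ℝ)) (𝓝 (lam + lam)) :=
    hmt'.add tendsto_const_nhds
  have hprod : Tendsto (fun v => (slope Real.cosh lam (hfun lam v))⁻¹ *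
      (Real.cosh lam * ((Real.cos v - 1) / v ^ 2)) * (hfun lam v + lam)) (𝓝[≠](0:ℝ))
      (𝓝 ((Real.sinh lam)⁻¹ * (Real.cosh lam * -(1/2)) * (lam + lam))) :=
    (h1.mul (tendsto_const_nhds.mul tendsto_cos_sub_one_div_sq)).mul h3
  have heq : ∀ᶠ v in 𝓝[≠](0:ℝ),
      (slope Real.cosh lam (hfun lam v))⁻¹ *
        (Real.cosh lam * ((Real.cos v - 1) / v ^ 2)) * (hfun lam v + lam) = Bfun lam v := by
    filter_upwards [hevε, hevne] with v h1v h2v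
    have hw : 1 < Real.cos v * Real.cosh lam := hball v h1v
    have hcos : Real.cos v < 1 := cos_lt_one' h2v (h1v.trans_le hεπ)
    have hwlt : Real.cos v * Real.cosh lam < Real.cosh lam := by nlinarith
    have hcoshv : Real.cosh (hfun lam v) = Real.cos v * Real.cosh lam := cosh_arccosh hw
    have hne : hfun lam v - lam ≠ 0 := sub_ne_zero.mpr (ne_of_lt (arccosh_lt hlam hw hwlt))
    have hcne : Real.cos v - 1 ≠ 0 := sub_ne_zero.mpr (ne_of_lt hcos)
    have hd1 : Real.cos v * Real.cosh lam - Real.cosh lam ≠ 0 := by nlinarith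
    rw [Bfun_eq hlam h2v, slope_def_field, hcoshv]
    show _ = (hfun lam v ^ 2 - lam ^ 2) / v ^ 2
    field_simp
    ring
  have hBt : Tendsto (Bfun lam) (𝓝[≠](0:ℝ)) (𝓝 (Bfun lam 0)) :=
    ((analyticAt_Bfun_zero hlam).continuousAt.tendsto).mono_left nhdsWithin_le_nhds
  have hu := tendsto_nhds_unique (hprod.congr' heq) hBt
  rw [← hu]
  field_simp
  ring

lemma iteratedDeriv_const_mul' (n : ℕ) (c : ℝ) (f : ℝ → ℝ) :
    iteratedDeriv n (fun y => c * f y) = fun x => c * iteratedDeriv n f x := by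
  induction n with
  | zero => simp [iteratedDeriv_zero]
  | succ n ih =>
    rw [iteratedDeriv_succ, iteratedDeriv_succ, ih]
    funext x
    exact deriv_const_mul_field c

lemma contDiffAt_iteratedDeriv_param (n : ℕ) (D : ℝ × ℝ → ℝ) (p : ℝ × ℝ)
    (hD : ContDiffAt ℝ ⊤ D p) :
    ContDiffAt ℝ ⊤ (fun q : ℝ × ℝ => iteratedDeriv n (fun y => D (q.1, y)) q.2) p := by
  induction n generalizing D p with
  | zero => simpa [iteratedDeriv_zero] using hD
  | succ n ih =>
    have hDn := ih D p hD
    have hL : ContDiffAt ℝ ⊤ (fun q : (ℝ × ℝ) × ℝ => (q.1.1, q.2)) (p, p.2) :=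
      ((contDiffAt_fst.fst).prodMk contDiffAt_snd)
    have h1 : ContDiffAt ℝ ⊤
        (fun q : (ℝ × ℝ) × ℝ =>
          iteratedDeriv n (fun y => D ((q.1.1, q.2).1, y)) (q.1.1, q.2).2) (p, p.2) :=
      hDn.comp (g := fun q : ℝ × ℝ => iteratedDeriv n (fun y => D (q.1, y)) q.2) (p, p.2) hL
    have h2 : ContDiffAt ℝ ⊤
        (fun q : ℝ × ℝ =>
          fderiv ℝ (fun y : ℝ => iteratedDeriv n (fun y' => D (q.1, y')) y) q.2) p := by
      refine ContDiffAt.fderiv (f := fun (q : ℝ × ℝ) (y : ℝ) =>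
        iteratedDeriv n (fun y' => D (q.1, y')) y) (g := fun q : ℝ × ℝ => q.2) ?_ contDiffAt_snd
        le_top
      exact h1
    have h3 : ContDiffAt ℝ ⊤
        (fun q : ℝ × ℝ =>
          fderiv ℝ (fun y : ℝ => iteratedDeriv n (fun y' => D (q.1, y')) y) q.2 (1:ℝ)) p :=
      h2.clm_apply contDiffAt_const
    refine h3.congr_of_eventuallyEq ?_
    filter_upwards with q
    rw [iteratedDeriv_succ, fderiv_apply_one_eq_deriv]

def Ffun (lam : ℝ) (p : ℝ × ℝ) : ℝ :=
  gfun lam (p.1 * p.2) * Real.exp (p.2 ^ 2 * Bfun lam (p.1 * p.2) / 4)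


lemma contDiffAt_Ffun {lam : ℝ} (hlam : 0 < lam) {p : ℝ × ℝ}
    (hp : 1 < Real.cos (p.1 * p.2) * Real.cosh lam) : ContDiffAt ℝ ⊤ (Ffun lam) p := by
  have hmul : AnalyticAt ℝ (fun q : ℝ × ℝ => q.1 * q.2) p := analyticAt_fst.mul analyticAt_snd
  have hg : AnalyticAt ℝ (fun q : ℝ × ℝ => gfun lam (q.1 * q.2)) p :=
    AnalyticAt.comp (f := fun q : ℝ × ℝ => q.1 * q.2) (analyticAt_gfun hp) hmul
  have hB : AnalyticAt ℝ (fun q : ℝ × ℝ => Bfun lam (q.1 * q.2)) p :=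
    AnalyticAt.comp (f := fun q : ℝ × ℝ => q.1 * q.2) (analyticAt_Bfun hlam hp) hmul
  have hexp : AnalyticAt ℝ (fun q : ℝ × ℝ =>
      Real.exp (q.2 ^ 2 * Bfun lam (q.1 * q.2) / 4)) p := by
    have h1 : AnalyticAt ℝ (fun q : ℝ × ℝ => q.2 ^ 2 * Bfun lam (q.1 * q.2) / 4) p :=
      ((analyticAt_snd.pow 2).mul hB).div analyticAt_const (by norm_num)
    exact analyticAt_rexp.comp h1
  exact (hg.mul hexp).contDiffAt

lemma pointwise_eq {lam : ℝ} (hlam : 0 < lam) {t y : ℝ} (ht : 0 < t)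
    (hu : 1 < Real.cos (Real.sqrt t * y) * Real.cosh lam) :
    Real.exp (-lam ^ 2 / (4 * t)) * Q2 t (Real.cos (Real.sqrt t * y) * Real.cosh lam) =
      Ffun lam (Real.sqrt t, y) := by
  set u := Real.sqrt t * y with hu_def
  have hA : arccosh (Real.cos u * Real.cosh lam) = hfun lam u := rfl
  have husq : u ^ 2 = t * y ^ 2 := by
    rw [hu_def, mul_pow, Real.sq_sqrt ht.le]
  have hkey : -lam ^ 2 / (4 * t) + Afun lam u / (4 * t) = y ^ 2 * Bfun lam u / 4 := by
    have h1 := sq_mul_Bfun (lam := lam) u hlam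
    rw [husq] at h1
    field_simp
    nlinarith [h1]
  calc Real.exp (-lam ^ 2 / (4 * t)) * Q2 t (Real.cos u * Real.cosh lam)
      = gfun lam u * (Real.exp (-lam ^ 2 / (4 * t)) *
          Real.exp (Afun lam u / (4 * t))) := by
        rw [Q2, hA]; unfold gfun Afun; ring
    _ = gfun lam u * Real.exp (-lam ^ 2 / (4 * t) + Afun lam u / (4 * t)) := by
        rw [Real.exp_add]
    _ = gfun lam u * Real.exp (y ^ 2 * Bfun lam u / 4) := by rw [hkey]
    _ = Ffun lam (Real.sqrt t, y) := rfl

theorem statement5pos (n : ℕ) (r lam : ℝ) (hlam : 0 < lam) :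
    Tendsto
      (fun t : ℝ => Real.exp (-lam ^ 2 / (4 * t)) *
        iteratedDeriv n
          (fun r : ℝ => Q2 t (Real.cos (Real.sqrt t * r) * Real.cosh lam)) r)
      (nhdsWithin 0 (Set.Ioi 0))
      (nhds ((lam / Real.sinh lam) *
        iteratedDeriv n
          (fun r : ℝ =>
            Real.exp (-(r ^ 2 * lam * (Real.cosh lam / Real.sinh lam)) / 4)) r)) := by
  obtain ⟨ε, hε, hεπ, hball⟩ := exists_eps hlam.ne'
  set Dn : ℝ × ℝ → ℝ := fun q => iteratedDeriv n (fun y => Ffun lam (q.1, y)) q.2 with hDn_def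
  -- continuity of Dn at (0, r)
  have hD0 : ContDiffAt ℝ ⊤ (Ffun lam) ((0:ℝ), r) := by
    apply contDiffAt_Ffun hlam
    simpa using hball 0 (by simpa using hε)
  have hDn : ContDiffAt ℝ ⊤ Dn ((0:ℝ), r) :=
    contDiffAt_iteratedDeriv_param n (Ffun lam) _ hD0
  have hcont : ContinuousAt Dn ((0:ℝ), r) := hDn.continuousAt
  have hsq : Tendsto (fun t : ℝ => Real.sqrt t) (𝓝[>](0:ℝ)) (𝓝 0) := by
    have := (Real.continuous_sqrt.tendsto 0).mono_left (nhdsWithin_le_nhds (s := Set.Ioi 0))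
    simpa using this
  have hpair : Tendsto (fun t : ℝ => (Real.sqrt t, r)) (𝓝[>](0:ℝ)) (𝓝 ((0:ℝ), r)) :=
    hsq.prodMk_nhds tendsto_const_nhds
  have hmain : Tendsto (fun t : ℝ => Dn (Real.sqrt t, r)) (𝓝[>](0:ℝ)) (𝓝 (Dn (0, r))) :=
    hcont.tendsto.comp hpair
  -- identify the limit value
  have hval : Dn (0, r) = (lam / Real.sinh lam) *
      iteratedDeriv n
        (fun y : ℝ => Real.exp (-(y ^ 2 * lam * (Real.cosh lam / Real.sinh lam)) / 4)) r := by
    have hF0 : (fun y : ℝ => Ffun lam ((0:ℝ), y)) =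
        fun y : ℝ => (lam / Real.sinh lam) *
          Real.exp (-(y ^ 2 * lam * (Real.cosh lam / Real.sinh lam)) / 4) := by
      funext y
      rw [Ffun]
      simp only
      rw [zero_mul, gfun_zero hlam, Bfun_zero hlam]
      congr 1
      ring_nf
    rw [hDn_def]
    simp only
    rw [hF0, iteratedDeriv_const_mul']
  rw [← hval]
  -- eventual equality
  refine hmain.congr' ?_
  have hδpos : 0 < (ε / (|r| + 1)) ^ 2 := by positivity
  have hmem : Set.Ioo (0:ℝ) ((ε / (|r| + 1)) ^ 2) ∈ 𝓝[>](0:ℝ) :=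
    Ioo_mem_nhdsGT_of_mem ⟨le_refl 0, hδpos⟩
  filter_upwards [hmem] with t ht
  obtain ⟨ht0, htδ⟩ := ht
  have hsqt : Real.sqrt t < ε / (|r| + 1) := by
    have h1 : Real.sqrt t < Real.sqrt ((ε / (|r| + 1)) ^ 2) := Real.sqrt_lt_sqrt ht0.le htδ
    rwa [Real.sqrt_sq (by positivity)] at h1
  have hsmall : ∀ y : ℝ, |y - r| < 1 → |Real.sqrt t * y| < ε := by
    intro y hy
    have h2 : |y| ≤ |r| + 1 := by
      have := abs_sub_abs_le_abs_sub y r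
      linarith
    have h3 : |Real.sqrt t * y| = Real.sqrt t * |y| := by
      rw [abs_mul, abs_of_nonneg (Real.sqrt_nonneg t)]
    rw [h3]
    calc Real.sqrt t * |y| ≤ Real.sqrt t * (|r| + 1) :=
          mul_le_mul_of_nonneg_left h2 (Real.sqrt_nonneg t)
      _ < (ε / (|r| + 1)) * (|r| + 1) := by
          apply mul_lt_mul_of_pos_right hsqt (by positivity)
      _ = ε := by field_simp
  -- now the equality of terms
  have heqfun : (fun y : ℝ => Real.exp (-lam ^ 2 / (4 * t)) *
      Q2 t (Real.cos (Real.sqrt t * y) * Real.cosh lam)) =ᶠ[𝓝 r]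
      fun y : ℝ => Ffun lam (Real.sqrt t, y) := by
    have hball1 : Metric.ball r 1 ∈ 𝓝 r := Metric.ball_mem_nhds r one_pos
    filter_upwards [hball1] with y hy
    have hy1 : |y - r| < 1 := by simpa [Real.dist_eq] using hy
    exact pointwise_eq hlam ht0 (hball _ (hsmall y hy1))
  calc Dn (Real.sqrt t, r)
      = iteratedDeriv n (fun y => Ffun lam (Real.sqrt t, y)) r := rfl
    _ = iteratedDeriv n (fun y : ℝ => Real.exp (-lam ^ 2 / (4 * t)) *
          Q2 t (Real.cos (Real.sqrt t * y) * Real.cosh lam)) r :=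
        (heqfun.iteratedDeriv_eq n).symm
    _ = Real.exp (-lam ^ 2 / (4 * t)) *
          iteratedDeriv n
            (fun y : ℝ => Q2 t (Real.cos (Real.sqrt t * y) * Real.cosh lam)) r := by
        rw [iteratedDeriv_const_mul']


/-- Proposition `p.drq`: for `n ≥ 0`, `r ≥ 0`, `λ ≠ 0`,
`lim_{t↓0} e^{−λ²/(4t)} ∂ⁿ/∂rⁿ [Q₂(t, cos(√t r)·cosh λ)]
  = (λ/sinh λ) ∂ⁿ/∂rⁿ e^{−r²λ coth λ/4}`. -/
theorem statement5 (n : ℕ) (r lam : ℝ) (hr : 0 ≤ r) (hlam : lam ≠ 0) :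
    Tendsto
      (fun t : ℝ => Real.exp (-lam ^ 2 / (4 * t)) *
        iteratedDeriv n
          (fun r : ℝ => Q2 t (Real.cos (Real.sqrt t * r) * Real.cosh lam)) r)
      (nhdsWithin 0 (Set.Ioi 0))
      (nhds ((lam / Real.sinh lam) *
        iteratedDeriv n
          (fun r : ℝ =>
            Real.exp (-(r ^ 2 * lam * (Real.cosh lam / Real.sinh lam)) / 4)) r)) := by
  rcases hlam.lt_or_gt with h | h
  · have H := statement5pos n r (-lam) (by linarith)
    simp only [Real.cosh_neg, Real.sinh_neg, neg_sq, neg_div_neg_eq, div_neg, neg_div, mul_neg,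
      neg_mul, neg_neg] at H
    simp only [neg_div] at H ⊢
    exact H
  · exact statement5pos n r lam h
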